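/- Let k > 0, m ≥ 1, n ≥ 3 and set D = √(m + k²(n−1)), a = k/D, c₃ > 0. Suppose z : I → ℝ is differentiable, with z + k − D > 0 and z + k + D > 0 on I, and z satisfies z' = −c₃(z + k − D)^((a+1)/2)·(z + k + D)^(−(a−1)/2). Define x(ξ) = c₃(z(ξ) + k − D)^((a−1)/2)·(z(ξ) + k + D)^(−(a+1)/2) and y(ξ) = x(ξ)z(ξ). Then (x, y) solves the system y' = [m + (n−2)k²]x² − 2kxy and x' = xy on I. -/

import Mathlib

/-- The non-constant-z family: if z satisfies
z' = −c₃(z+k−D)^((a+1)/2)(z+k+D)^(−(a−1)/2) with D = √(m+k²(n−1)), a = k/D, and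
x = c₃(z+k−D)^((a−1)/2)(z+k+D)^(−(a+1)/2), y = xz, then (x, y) solves the planar
system y' = [m + (n−2)k²]x² − 2kxy, x' = xy. -/
theorem stmt_6 (k m n c₃ : ℝ) (hk : 0 < k) (hm : 1 ≤ m) (hn : 3 ≤ n)
    (hc₃ : 0 < c₃)
    (D a : ℝ) (hD : D = Real.sqrt (m + k ^ 2 * (n - 1))) (ha : a = k / D)
    (s t : ℝ) (I : Set ℝ) (hI : I = Set.Ioo s t)
    (z : ℝ → ℝ)
    (hz1 : ∀ ξ ∈ I, z ξ + k - D > 0)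
    (hz2 : ∀ ξ ∈ I, z ξ + k + D > 0)
    (hz' : ∀ ξ ∈ I, HasDerivAt z
      (-c₃ * (z ξ + k - D) ^ ((a + 1) / 2) * (z ξ + k + D) ^ (-((a - 1) / 2))) ξ)
    (x y : ℝ → ℝ)
    (hx : x = fun ξ => c₃ * (z ξ + k - D) ^ ((a - 1) / 2) * (z ξ + k + D) ^ (-((a + 1) / 2)))
    (hy : y = fun ξ => x ξ * z ξ) :
    ∀ ξ ∈ I,
      HasDerivAt y ((m + (n - 2) * k ^ 2) * x ξ ^ 2 - 2 * k * x ξ * y ξ) ξ ∧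
      HasDerivAt x (x ξ * y ξ) ξ := by
  -- basic facts
  have hMpos : (0:ℝ) < m + k ^ 2 * (n - 1) := by nlinarith
  have hDpos : 0 < D := by rw [hD]; exact Real.sqrt_pos.mpr hMpos
  have hD2 : D ^ 2 = m + k ^ 2 * (n - 1) := by
    rw [hD]; exact Real.sq_sqrt hMpos.le
  have haD : a * D = k := by rw [ha]; field_simp
  intro ξ hξ
  set p : ℝ := (a - 1) / 2 with hp
  set q : ℝ := -((a + 1) / 2) with hq
  have hu : 0 < z ξ + k - D := hz1 ξ hξ
  have hv : 0 < z ξ + k + D := hz2 ξ hξ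
  set u : ℝ := z ξ + k - D with hud
  set v : ℝ := z ξ + k + D with hvd
  have hune : u ≠ 0 := ne_of_gt hu
  have hvne : v ≠ 0 := ne_of_gt hv
  set A : ℝ := u ^ p with hA
  set B : ℝ := v ^ q with hB
  have hAu : u ^ (p - 1) = A / u := Real.rpow_sub_one hune p
  have hBv : v ^ (q - 1) = B / v := Real.rpow_sub_one hvne q
  -- z' rewritten
  have hep : (a + 1) / 2 = p + 1 := by rw [hp]; ring
  have heq : -((a - 1) / 2) = q + 1 := by rw [hq]; ring
  have hZ : (-c₃ * u ^ ((a + 1) / 2) * v ^ (-((a - 1) / 2)))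
      = -c₃ * (A * u) * (B * v) := by
    rw [hep, heq, Real.rpow_add_one hune, Real.rpow_add_one hvne]
  have hzd : HasDerivAt z (-c₃ * (A * u) * (B * v)) ξ := hZ ▸ hz' ξ hξ
  -- derivative of u, v as functions of ξ
  have hud' : HasDerivAt (fun ξ => z ξ + k - D) (-c₃ * (A * u) * (B * v)) ξ :=
    (hzd.add_const k).sub_const D
  have hvd' : HasDerivAt (fun ξ => z ξ + k + D) (-c₃ * (A * u) * (B * v)) ξ :=
    (hzd.add_const k).add_const D
  have hAd : HasDerivAt (fun ξ => (z ξ + k - D) ^ p)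
      ((-c₃ * (A * u) * (B * v)) * p * u ^ (p - 1)) ξ :=
    hud'.rpow_const (Or.inl hune)
  have hBd : HasDerivAt (fun ξ => (z ξ + k + D) ^ q)
      ((-c₃ * (A * u) * (B * v)) * q * v ^ (q - 1)) ξ :=
    hvd'.rpow_const (Or.inl hvne)
  have hxd0 : HasDerivAt x
      ((c₃ * ((-c₃ * (A * u) * (B * v)) * p * u ^ (p - 1))) * B
        + (c₃ * A) * ((-c₃ * (A * u) * (B * v)) * q * v ^ (q - 1))) ξ := by
    rw [hx]
    exact (hAd.const_mul c₃).mul hBd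
  have hxval : x ξ = c₃ * A * B := by simp only [hx]; rfl
  have hyval : y ξ = c₃ * A * B * z ξ := by simp only [hy]; rw [hxval]
  -- key scalar identity
  have hkey : p * v + q * u = -(z ξ) := by
    rw [hp, hq, hud, hvd]
    linear_combination haD
  have huv : u * v = z ξ ^ 2 + 2 * k * z ξ - (m + (n - 2) * k ^ 2) := by
    rw [hud, hvd]; linear_combination -hD2
  have hxd : HasDerivAt x (x ξ * y ξ) ξ := by
    convert hxd0 using 1
    rw [hxval, hyval, hAu, hBv]
    rw [div_eq_mul_inv, div_eq_mul_inv]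
    linear_combination c₃^2 * A^2 * B^2 * hkey + c₃^2 * A^2 * B^2 * v * p * (mul_inv_cancel₀ hune) + c₃^2 * A^2 * B^2 * u * q * (mul_inv_cancel₀ hvne)
  refine ⟨?_, hxd⟩
  have hyd0 := hxd.mul hzd
  simp only [hy]
  refine hyd0.congr_deriv ?_
  symm
  simp only [hyval, hxval]
  linear_combination (-(c₃^2) * A^2 * B^2) * huv - 2 * c₃^2 * A^2 * B^2 * hD2
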